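/- Let ν be a finite signed Borel measure on ℝ satisfying conditions (A1) and (A2). Then the function f_ν(x) := exp(−2 ν^c((−∞, x])) · ∏_{y ∈ D, y ≤ x} (1 − ν({y}))/(1 + ν({y})) is well-defined for every x ∈ ℝ, and there exist constants 0 < m ≤ M such that m ≤ f_ν(x) ≤ M for every x ∈ ℝ. -/

import Mathlib

open MeasureTheory
open scoped ENNReal

/-- The atomic part of ν evaluated on (−∞, x]: ν_d((−∞,x]) = ∑_{y ∈ D, y ≤ x} ν({y}). -/
noncomputable def atomicPartIic (ν : MeasureTheory.SignedMeasure ℝ) (x : ℝ) : ℝ :=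
  ∑' y : {y : ℝ // ν {y} ≠ 0 ∧ y ≤ x}, ν {(y : ℝ)}

/-- ν^c((−∞, x]), where ν^c := ν − ν_d is the atomless part of ν. -/
noncomputable def contPartIic (ν : MeasureTheory.SignedMeasure ℝ) (x : ℝ) : ℝ :=
  ν (Set.Iic x) - atomicPartIic ν x

/-- The function f_ν(x) := exp(−2 ν^c((−∞, x])) · ∏_{y ∈ D, y ≤ x} (1 − ν({y}))/(1 + ν({y})). -/
noncomputable def fnu (ν : MeasureTheory.SignedMeasure ℝ) (x : ℝ) : ℝ :=
  Real.exp (-2 * contPartIic ν x) *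
    ∏' y : {y : ℝ // ν {y} ≠ 0 ∧ y ≤ x}, (1 - ν {(y : ℝ)}) / (1 + ν {(y : ℝ)})


open MeasureTheory Real
open scoped ENNReal

namespace FnuAux

/-- Total variation of a singleton, as a real number. -/
noncomputable def tv (ν : SignedMeasure ℝ) (y : ℝ) : ℝ := (ν.totalVariation {y}).toReal

instance instFinTV (ν : SignedMeasure ℝ) : IsFiniteMeasure ν.totalVariation :=
  inferInstanceAs (IsFiniteMeasure (ν.toJordanDecomposition.posPart + ν.toJordanDecomposition.negPart))

lemma tv_nonneg (ν : SignedMeasure ℝ) (y : ℝ) : 0 ≤ tv ν y := ENNReal.toReal_nonneg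

lemma abs_apply_le (ν : SignedMeasure ℝ) {s : Set ℝ} (hs : MeasurableSet s) :
    |ν s| ≤ (ν.totalVariation s).toReal := by
  have h := ν.toSignedMeasure_toJordanDecomposition
  conv_lhs => rw [← h]
  rw [JordanDecomposition.toSignedMeasure, Measure.toSignedMeasure_sub_apply hs,
    SignedMeasure.totalVariation, Measure.add_apply,
    ENNReal.toReal_add (measure_ne_top _ _) (measure_ne_top _ _)]
  exact (abs_sub _ _).trans (by
    simp [Measure.real])

lemma sum_tv_le (ν : SignedMeasure ℝ) (s : Finset ℝ) :
    ∑ y ∈ s, tv ν y ≤ (ν.totalVariation Set.univ).toReal := by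
  classical
  have h1 : ν.totalVariation ↑s = ∑ y ∈ s, ν.totalVariation {y} := by
    have hs : (↑s : Set ℝ) = ⋃ y ∈ s, {y} := (Set.biUnion_of_singleton (↑s : Set ℝ)).symm
    rw [hs, measure_biUnion_finset ?_ (fun _ _ => measurableSet_singleton _)]
    intro a _ b _ hab
    exact Set.disjoint_singleton.mpr hab
  calc ∑ y ∈ s, tv ν y = (ν.totalVariation ↑s).toReal := by
        rw [h1, ENNReal.toReal_sum (fun a _ => measure_ne_top _ _)]; rfl
    _ ≤ _ := ENNReal.toReal_mono (measure_ne_top _ _) (measure_mono (Set.subset_univ _))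

lemma sum_tv_le' (ν : SignedMeasure ℝ) {P : ℝ → Prop} (u : Finset {y : ℝ // P y}) :
    ∑ i ∈ u, tv ν i.val ≤ (ν.totalVariation Set.univ).toReal := by
  classical
  calc ∑ i ∈ u, tv ν i.val = ∑ y ∈ u.image Subtype.val, tv ν y :=
        (Finset.sum_image (fun a _ b _ h => Subtype.val_injective h)).symm
    _ ≤ _ := sum_tv_le ν _

lemma summable_tv (ν : SignedMeasure ℝ) (P : ℝ → Prop) :
    Summable (fun y : {y : ℝ // P y} => tv ν y.val) :=
  summable_of_sum_le (fun _ => tv_nonneg ν _) (fun u => sum_tv_le' ν u)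

lemma tsum_tv_le (ν : SignedMeasure ℝ) (P : ℝ → Prop) :
    ∑' y : {y : ℝ // P y}, tv ν y.val ≤ (ν.totalVariation Set.univ).toReal :=
  Summable.tsum_le_of_sum_le (summable_tv ν P) (fun u => sum_tv_le' ν u)

lemma abs_log_one_add_le {t : ℝ} (h : |t| ≤ 1/2) : |Real.log (1 + t)| ≤ 2 * |t| := by
  obtain ⟨hl, hr⟩ := abs_le.mp h
  have hpos : (0:ℝ) < 1 + t := by linarith
  rcases le_or_gt 0 t with ht | ht
  · rw [abs_of_nonneg (Real.log_nonneg (by linarith)), abs_of_nonneg ht]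
    have := Real.log_le_sub_one_of_pos hpos
    linarith
  · rw [abs_of_nonpos (Real.log_nonpos (by linarith) (by linarith)), abs_of_neg ht]
    have h3 := Real.log_le_sub_one_of_pos (inv_pos.mpr hpos)
    rw [Real.log_inv] at h3
    have h7 : (1+t)⁻¹ - 1 ≤ -2*t := by
      rw [sub_le_iff_le_add, inv_le_iff_one_le_mul₀ hpos]
      nlinarith
    linarith

lemma abs_log_ratio {a c : ℝ} (ha : |a| ≤ c) (hc : c ≤ 1/2) :
    |Real.log ((1 - a) / (1 + a))| ≤ 4 * c := by
  have h1 : |a| ≤ 1/2 := ha.trans hc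
  obtain ⟨hl, hr⟩ := abs_le.mp h1
  rw [Real.log_div (by linarith) (by linarith)]
  have hb1 : |Real.log (1 - a)| ≤ 2 * |a| := by
    simpa [sub_eq_add_neg] using abs_log_one_add_le (t := -a) (by rwa [abs_neg])
  have hb2 := abs_log_one_add_le h1
  calc |Real.log (1-a) - Real.log (1+a)| ≤ |Real.log (1-a)| + |Real.log (1+a)| := abs_sub _ _
    _ ≤ 2*|a| + 2*|a| := add_le_add hb1 hb2
    _ ≤ 4*c := by linarith

/-- Summability of `|log ((1-ν{y})/(1+ν{y}))|` over any subtype. -/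
lemma summable_abs_log (ν : SignedMeasure ℝ) (P : ℝ → Prop)
    (habs : ∀ a : ℝ, |ν {a}| ≤ tv ν a) :
    Summable (fun y : {y : ℝ // P y} => |Real.log ((1 - ν {y.val}) / (1 + ν {y.val}))|) := by
  set ι := {y : ℝ // P y}
  set T : Set ι := {i | 1/2 < tv ν i.val} with hT
  have hTfin : T.Finite := by
    have htend := (summable_tv ν P).tendsto_cofinite_zero
    have hev : ∀ᶠ i in (Filter.cofinite : Filter ι), tv ν i.val < 1/2 :=
      htend.eventually (gt_mem_nhds (by norm_num : (0:ℝ) < 1/2))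
    exact (Filter.eventually_cofinite.mp hev).subset (fun i hi => not_lt.mpr (le_of_lt hi))
  have hcompl : Summable ((fun y : ι => |Real.log ((1 - ν {y.val}) / (1 + ν {y.val}))|) ∘
      ((↑) : ↥Tᶜ → ι)) := by
    apply Summable.of_nonneg_of_le (f := fun i : ↥Tᶜ => 4 * tv ν (i.val).val)
    · intro _; exact abs_nonneg _
    · intro i; exact abs_log_ratio (habs _) (not_lt.mp i.2)
    · exact ((summable_tv ν P).subtype Tᶜ).mul_left 4
  exact hTfin.summable_compl_iff.mp hcompl

end FnuAux

set_option maxHeartbeats 1000000 in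
/-- Under (A1) (and (A2), automatic for a signed measure), the function
f_ν is well-defined for every x (the defining sum and product converge) and there exist
constants 0 < m ≤ M such that m ≤ f_ν(x) ≤ M for every x ∈ ℝ. -/
theorem fnu_wellDefined_and_bounded (ν : MeasureTheory.SignedMeasure ℝ)
    (hA1 : ∀ a : ℝ, ν.totalVariation {a} < 1) :
    (∀ x : ℝ, Summable (fun y : {y : ℝ // ν {y} ≠ 0 ∧ y ≤ x} => ν {(y : ℝ)}) ∧
      Multipliable (fun y : {y : ℝ // ν {y} ≠ 0 ∧ y ≤ x} =>
        (1 - ν {(y : ℝ)}) / (1 + ν {(y : ℝ)}))) ∧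
    (∃ m M : ℝ, 0 < m ∧ m ≤ M ∧ ∀ x : ℝ, m ≤ fnu ν x ∧ fnu ν x ≤ M) := by
  classical
  have habs : ∀ a : ℝ, |ν {a}| ≤ FnuAux.tv ν a :=
    fun a => FnuAux.abs_apply_le ν (measurableSet_singleton a)
  have htv1 : ∀ a : ℝ, FnuAux.tv ν a < 1 := by
    intro a
    have h1 : (ν.totalVariation {a}).toReal < (1 : ℝ≥0∞).toReal :=
      (ENNReal.toReal_lt_toReal (measure_ne_top _ _) ENNReal.one_ne_top).mpr (hA1 a)
    simpa [FnuAux.tv] using h1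
  have habs1 : ∀ a : ℝ, |ν {a}| < 1 := fun a => lt_of_le_of_lt (habs a) (htv1 a)
  have hfac : ∀ a : ℝ, 0 < (1 - ν {a}) / (1 + ν {a}) := by
    intro a
    obtain ⟨h1, h2⟩ := abs_lt.mp (habs1 a)
    exact div_pos (by linarith) (by linarith)
  set K := (ν.totalVariation Set.univ).toReal with hK
  have hK0 : 0 ≤ K := ENNReal.toReal_nonneg
  have hsum : ∀ x : ℝ, Summable (fun y : {y : ℝ // ν {y} ≠ 0 ∧ y ≤ x} => ν {(y : ℝ)}) := by
    intro x
    refine Summable.of_norm_bounded (FnuAux.summable_tv ν _) (fun y => ?_)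
    simpa [Real.norm_eq_abs] using habs y.val
  have hlogabs : ∀ P : ℝ → Prop,
      Summable (fun y : {y : ℝ // P y} => |Real.log ((1 - ν {y.val}) / (1 + ν {y.val}))|) :=
    fun P => FnuAux.summable_abs_log ν P habs
  have hlog : ∀ x : ℝ, Summable (fun y : {y : ℝ // ν {y} ≠ 0 ∧ y ≤ x} =>
      Real.log ((1 - ν {(y : ℝ)}) / (1 + ν {(y : ℝ)}))) :=
    fun x => summable_abs_iff.mp (hlogabs _)
  have hprod : ∀ x : ℝ, HasProd (fun y : {y : ℝ // ν {y} ≠ 0 ∧ y ≤ x} =>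
      (1 - ν {(y : ℝ)}) / (1 + ν {(y : ℝ)}))
      (Real.exp (∑' y : {y : ℝ // ν {y} ≠ 0 ∧ y ≤ x},
        Real.log ((1 - ν {(y : ℝ)}) / (1 + ν {(y : ℝ)})))) := by
    intro x
    have h := (hlog x).hasSum.rexp
    have heq : (Real.exp ∘ fun y : {y : ℝ // ν {y} ≠ 0 ∧ y ≤ x} =>
        Real.log ((1 - ν {(y : ℝ)}) / (1 + ν {(y : ℝ)}))) =
        fun y : {y : ℝ // ν {y} ≠ 0 ∧ y ≤ x} => (1 - ν {(y : ℝ)}) / (1 + ν {(y : ℝ)}) :=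
      funext fun y => Real.exp_log (hfac y.val)
    rwa [heq] at h
  refine ⟨fun x => ⟨hsum x, (hprod x).multipliable⟩, ?_⟩
  set L := ∑' y : {y : ℝ // ν {y} ≠ 0}, |Real.log ((1 - ν {y.val}) / (1 + ν {y.val}))| with hLdef
  have hL0 : 0 ≤ L := tsum_nonneg (fun _ => abs_nonneg _)
  have hS : ∀ x : ℝ, |∑' y : {y : ℝ // ν {y} ≠ 0 ∧ y ≤ x},
      Real.log ((1 - ν {(y : ℝ)}) / (1 + ν {(y : ℝ)}))| ≤ L := by
    intro x
    have hsumnorm : Summable (fun y : {y : ℝ // ν {y} ≠ 0 ∧ y ≤ x} =>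
        ‖Real.log ((1 - ν {(y : ℝ)}) / (1 + ν {(y : ℝ)}))‖) := by
      simp only [Real.norm_eq_abs]; exact hlogabs _
    have h1 := norm_tsum_le_tsum_norm hsumnorm
    simp only [Real.norm_eq_abs] at h1
    refine h1.trans ?_
    exact Summable.tsum_le_tsum_of_inj
      (fun y : {y : ℝ // ν {y} ≠ 0 ∧ y ≤ x} => (⟨y.val, y.2.1⟩ : {y : ℝ // ν {y} ≠ 0}))
      (fun a b hab => Subtype.ext (by simpa using congrArg Subtype.val hab))
      (fun c _ => abs_nonneg _) (fun y => le_rfl) (hlogabs _) (hlogabs _)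
  have hcont : ∀ x : ℝ, |contPartIic ν x| ≤ 2 * K := by
    intro x
    have h1 : |ν (Set.Iic x)| ≤ K := by
      refine (FnuAux.abs_apply_le ν measurableSet_Iic).trans ?_
      exact ENNReal.toReal_mono (measure_ne_top _ _) (measure_mono (Set.subset_univ _))
    have habs_sum : Summable (fun y : {y : ℝ // ν {y} ≠ 0 ∧ y ≤ x} => |ν {(y : ℝ)}|) :=
      Summable.of_nonneg_of_le (fun _ => abs_nonneg _) (fun y => habs y.val)
        (FnuAux.summable_tv ν _)
    have h2 : |atomicPartIic ν x| ≤ K := by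
      rw [atomicPartIic]
      have habs_sum' : Summable (fun y : {y : ℝ // ν {y} ≠ 0 ∧ y ≤ x} =>
          ‖ν {(y : ℝ)}‖) := by
        simp only [Real.norm_eq_abs]; exact habs_sum
      have h3 := norm_tsum_le_tsum_norm habs_sum'
      simp only [Real.norm_eq_abs] at h3
      refine h3.trans ?_
      exact (Summable.tsum_le_tsum (f := fun y : {y : ℝ // ν {y} ≠ 0 ∧ y ≤ x} => |ν {(y : ℝ)}|)
        (g := fun y : {y : ℝ // ν {y} ≠ 0 ∧ y ≤ x} => FnuAux.tv ν y.val)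
        (fun y => habs y.val) habs_sum
        (FnuAux.summable_tv ν _)).trans (FnuAux.tsum_tv_le ν _)
    calc |contPartIic ν x| = |ν (Set.Iic x) - atomicPartIic ν x| := rfl
      _ ≤ |ν (Set.Iic x)| + |atomicPartIic ν x| := abs_sub _ _
      _ ≤ 2 * K := by linarith
  refine ⟨Real.exp (-(4*K + L)), Real.exp (4*K + L), Real.exp_pos _,
    Real.exp_le_exp.mpr (by linarith), fun x => ?_⟩
  have hfnu : fnu ν x = Real.exp (-2 * contPartIic ν x +
      ∑' y : {y : ℝ // ν {y} ≠ 0 ∧ y ≤ x},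
        Real.log ((1 - ν {(y : ℝ)}) / (1 + ν {(y : ℝ)}))) := by
    rw [fnu, (hprod x).tprod_eq, ← Real.exp_add]
  obtain ⟨hc1, hc2⟩ := abs_le.mp (hcont x)
  obtain ⟨hs1, hs2⟩ := abs_le.mp (hS x)
  constructor
  · rw [hfnu]; exact Real.exp_le_exp.mpr (by linarith)
  · rw [hfnu]; exact Real.exp_le_exp.mpr (by linarith)
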